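/- Let G = (V,E) be a finite connected simple graph and s ∈ V. If u and v are layering-equivalent vertices of G with respect to s (i.e., they lie in the same layering class), then dist_G(u,v) ≤ 3·tl(G) + 1. -/

import Mathlib

open SimpleGraph

/-- A tree decomposition of a graph `G`, with decomposition tree indexed by `ι`. -/
structure TreeDecomp {V : Type} (G : SimpleGraph V) (ι : Type) : Type where
  /-- the decomposition tree -/
  tree : SimpleGraph ι
  /-- the decomposition tree is a tree -/
  isTree : tree.IsTree
  /-- the bags -/
  bag : ι → Set V
  /-- every vertex of `G` belongs to some bag -/
  bag_cover : ∀ v : V, ∃ t, v ∈ bag t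
  /-- both endpoints of every edge of `G` lie in a common bag -/
  bag_edge : ∀ ⦃u v : V⦄, G.Adj u v → ∃ t, u ∈ bag t ∧ v ∈ bag t
  /-- the nodes whose bag contains a given vertex induce a connected subtree -/
  bag_conn : ∀ v : V, (tree.induce {t | v ∈ bag t}).Connected

/-- `G` has a tree decomposition all of whose bags have diameter at most `ℓ` in `G`. -/
def HasTDLength {V : Type} (G : SimpleGraph V) (ℓ : ℕ) : Prop :=
  ∃ (ι : Type) (td : TreeDecomp G ι), ∀ t, ∀ u ∈ td.bag t, ∀ v ∈ td.bag t, G.dist u v ≤ ℓ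

/-- The tree-length of `G`: the minimum length over all tree decompositions of `G`. -/
noncomputable def treeLength {V : Type} (G : SimpleGraph V) : ℕ :=
  sInf {ℓ | HasTDLength G ℓ}

/-- `u` and `v` are layering-equivalent w.r.t. source `s`: they lie at the same
distance `i` from `s` and are joined by a path all of whose (intermediate)
vertices are at distance at least `i` from `s`. -/
def LayerEquiv {V : Type} (G : SimpleGraph V) (s u v : V) : Prop :=
  G.dist s u = G.dist s v ∧
    ∃ p : G.Walk u v, p.IsPath ∧ ∀ w ∈ p.support, G.dist s u ≤ G.dist s w

/-- The layering class of the vertex `v` w.r.t. source `s`. -/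
def layeringClassOf {V : Type} (G : SimpleGraph V) (s v : V) : Set V :=
  {u | LayerEquiv G s v u}

/-- `C` is a layering class of `G` w.r.t. source `s`. -/
def IsLayeringClass {V : Type} (G : SimpleGraph V) (s : V) (C : Set V) : Prop :=
  ∃ v, C = layeringClassOf G s v

section Auxiliary

variable {ι : Type}

/-- If an induced subgraph on `S` is connected, any two vertices of `S` are joined by
a walk staying inside `S`. -/
lemma reach_in_set {T : SimpleGraph ι} {S : Set ι} (hconn : (T.induce S).Connected)
    {a b : ι} (ha : a ∈ S) (hb : b ∈ S) :
    ∃ q : T.Walk a b, ∀ m ∈ q.support, m ∈ S := by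
  obtain ⟨q⟩ := hconn.preconnected ⟨a, ha⟩ ⟨b, hb⟩
  refine ⟨(q.map (SimpleGraph.Embedding.induce S).toHom).copy rfl rfl, ?_⟩
  intro m hm
  have hm := (Walk.support_copy _ _ _).subst (motive := fun l => m ∈ l) hm
  rw [Walk.support_map] at hm
  obtain ⟨z, _, rfl⟩ := List.mem_map.mp hm
  exact z.2

/-- Decompose a walk at the first vertex belonging to a set `S` containing the endpoint. -/
lemma exists_first_hit {T : SimpleGraph ι} {S : Set ι} {a b : ι} (w : T.Walk a b)
    (hb : b ∈ S) :
    ∃ (m : ι) (_ : m ∈ S) (w₁ : T.Walk a m) (w₂ : T.Walk m b),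
      w = w₁.append w₂ ∧ ∀ z ∈ w₁.support, z ∈ S → z = m := by
  induction w with
  | nil =>
    exact ⟨_, hb, Walk.nil, Walk.nil, rfl, by intro z hz _; simpa using hz⟩
  | @cons x y z h w ih =>
    by_cases hx : x ∈ S
    · exact ⟨x, hx, Walk.nil, Walk.cons h w, rfl, by simp⟩
    · obtain ⟨m, hm, w₁, w₂, hsplit, hfirst⟩ := ih hb
      refine ⟨m, hm, Walk.cons h w₁, w₂, by rw [hsplit]; rfl, ?_⟩
      intro t ht htS
      rw [Walk.support_cons] at ht
      obtain rfl | ht := List.mem_cons.mp ht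
      · exact absurd htS hx
      · exact hfirst t ht htS

/-- Median property of trees: any three paths joining three vertices pairwise have a
common vertex. -/
lemma tree_median {T : SimpleGraph ι} (hT : T.IsTree) {a b c : ι}
    {p : T.Walk a b} (hp : p.IsPath) {q : T.Walk a c} (hq : q.IsPath)
    {r : T.Walk b c} (hr : r.IsPath) :
    ∃ m, m ∈ p.support ∧ m ∈ q.support ∧ m ∈ r.support := by
  haveI := Classical.decEq ι
  obtain ⟨m, hm, w₁, w₂, hsplit, hfirst⟩ :=
    exists_first_hit (S := {z | z ∈ q.support}) p.reverse q.start_mem_support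
  have hw₁path : w₁.IsPath := by
    have := hp.reverse
    rw [hsplit] at this
    exact this.of_append_left
  have hmem : m ∈ p.support := by
    have : m ∈ p.reverse.support := by
      rw [hsplit, Walk.mem_support_append_iff]; left; exact Walk.end_mem_support _
    rwa [Walk.support_reverse, List.mem_reverse] at this
  set q₂ := q.dropUntil m hm with hq₂def
  have hq₂path : q₂.IsPath := hq.dropUntil hm
  have hr' : (w₁.append q₂).IsPath := by
    rw [Walk.isPath_def, Walk.support_append]
    refine List.Nodup.append (Walk.isPath_def _ |>.mp hw₁path)
      ((Walk.isPath_def _ |>.mp hq₂path).tail) ?_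
    intro t ht ht2
    have htq : t ∈ q.support := Walk.support_dropUntil_subset q hm (List.mem_of_mem_tail ht2)
    have : t = m := hfirst t ht htq
    subst this
    have := Walk.isPath_def _ |>.mp hq₂path
    rw [q₂.support_eq_cons] at this
    exact (List.nodup_cons.mp this).1 ht2
  obtain ⟨r₀, _, hun⟩ := hT.existsUnique_path b c
  have : r = w₁.append q₂ := (hun r hr).trans (hun _ hr').symm
  refine ⟨m, hmem, hm, ?_⟩
  rw [this, Walk.mem_support_append_iff]
  exact Or.inl (Walk.end_mem_support _)

/-- For a walk `w` in `G` and bags containing its endpoints, there is a path in the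
decomposition tree between these bags all of whose bags meet the walk. -/
lemma TreeDecomp.exists_path_bags {V : Type} {G : SimpleGraph V} (td : TreeDecomp G ι)
    {x y : V} (w : G.Walk x y) {t₁ t₂ : ι} (h₁ : x ∈ td.bag t₁) (h₂ : y ∈ td.bag t₂) :
    ∃ π : td.tree.Walk t₁ t₂, π.IsPath ∧
      ∀ m ∈ π.support, ∃ z ∈ w.support, z ∈ td.bag m := by
  haveI := Classical.decEq ι
  suffices h : ∃ π : td.tree.Walk t₁ t₂, ∀ m ∈ π.support, ∃ z ∈ w.support, z ∈ td.bag m by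
    obtain ⟨π, hπ⟩ := h
    exact ⟨π.toPath, π.toPath.2, fun m hm => hπ m (Walk.support_toPath_subset π hm)⟩
  induction w generalizing t₁ with
  | @nil x =>
    obtain ⟨q, hq⟩ := reach_in_set (td.bag_conn x) h₁ h₂
    exact ⟨q, fun m hm => ⟨x, by simp, hq m hm⟩⟩
  | @cons x x' y h w ih =>
    obtain ⟨t₀, ht₀x, ht₀x'⟩ := td.bag_edge h
    obtain ⟨q₂, hq₂⟩ := ih ht₀x' h₂
    obtain ⟨q₁, hq₁⟩ := reach_in_set (td.bag_conn x) h₁ ht₀x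
    refine ⟨q₁.append q₂, fun m hm => ?_⟩
    rcases (Walk.mem_support_append_iff _ _).mp hm with hm | hm
    · exact ⟨x, by simp, hq₁ m hm⟩
    · obtain ⟨z, hz, hzb⟩ := hq₂ m hm
      exact ⟨z, by simp [hz], hzb⟩

lemma subsingleton_connected {κ : Type} [Nonempty κ] [Subsingleton κ] (T : SimpleGraph κ) :
    T.Connected := by
  refine ⟨fun a b => ?_⟩
  rw [Subsingleton.elim a b]

/-- `G` always admits the trivial tree decomposition. -/
lemma hasTDLength_card {V : Type} [Fintype V] (G : SimpleGraph V) (hG : G.Connected) :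
    HasTDLength G (Fintype.card V) := by
  refine ⟨Unit, ⟨⊥, ⟨subsingleton_connected _, ?_⟩, fun _ => Set.univ,
    fun v => ⟨(), trivial⟩, fun u v _ => ⟨(), trivial, trivial⟩,
    fun v => by
      haveI : Nonempty ({t : Unit | v ∈ (Set.univ : Set V)}) := ⟨⟨(), trivial⟩⟩
      exact subsingleton_connected _⟩, ?_⟩
  · intro v c hc
    exact hc.ne_nil (by cases c with
      | nil => rfl
      | cons h _ => exact absurd h (by simp))
  · intro t u _ v _
    haveI := Classical.decEq V
    obtain ⟨w⟩ := hG u v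
    exact le_of_lt (lt_of_le_of_lt (dist_le w.toPath.1) w.toPath.2.length_lt)

end Auxiliary

/-- If `u` and `v` are layering-equivalent vertices of `G` with
respect to `s`, then `dist_G(u,v) ≤ 3 · tl(G) + 1`. -/
theorem layerEquiv_dist_le {V : Type} [Fintype V]
    (G : SimpleGraph V) (hG : G.Connected) (s u v : V)
    (h : LayerEquiv G s u v) :
    G.dist u v ≤ 3 * treeLength G + 1 := by
  classical
  set ℓ := treeLength G with hℓ
  have hmem : HasTDLength G ℓ := by
    have : treeLength G ∈ {n | HasTDLength G n} :=
      Nat.sInf_mem ⟨Fintype.card V, hasTDLength_card G hG⟩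
    exact this
  obtain ⟨ι, td, hlen⟩ := hmem
  obtain ⟨hdist, P, hPpath, hP⟩ := h
  set i := G.dist s u with hi
  obtain ⟨Q, hQ⟩ := (hG s u).exists_walk_length_eq_dist
  obtain ⟨R, hR⟩ := (hG s v).exists_walk_length_eq_dist
  have keyQ : ∀ a ∈ Q.support, G.dist s a + G.dist a u ≤ i := by
    intro a ha
    have h1 := dist_le (Q.takeUntil a ha)
    have h2 := dist_le (Q.dropUntil a ha)
    have h3 : (Q.takeUntil a ha).length + (Q.dropUntil a ha).length = Q.length := by
      rw [← Walk.length_append, Walk.take_spec]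
    omega
  have keyR : ∀ b ∈ R.support, G.dist s b + G.dist b v ≤ i := by
    intro b hb
    have h1 := dist_le (R.takeUntil b hb)
    have h2 := dist_le (R.dropUntil b hb)
    have h3 : (R.takeUntil b hb).length + (R.dropUntil b hb).length = R.length := by
      rw [← Walk.length_append, Walk.take_spec]
    omega
  obtain ⟨tu, htu⟩ := td.bag_cover u
  obtain ⟨tv, htv⟩ := td.bag_cover v
  obtain ⟨ts, hts⟩ := td.bag_cover s
  obtain ⟨π₁, hπ₁p, hπ₁⟩ := td.exists_path_bags P htu htv
  obtain ⟨π₂, hπ₂p, hπ₂⟩ := td.exists_path_bags Q.reverse htu hts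
  obtain ⟨π₃, hπ₃p, hπ₃⟩ := td.exists_path_bags R.reverse htv hts
  obtain ⟨m, hm1, hm2, hm3⟩ := tree_median td.isTree hπ₁p hπ₂p hπ₃p
  obtain ⟨cP, hcP, hcPb⟩ := hπ₁ m hm1
  obtain ⟨aQ, haQ, haQb⟩ := hπ₂ m hm2
  obtain ⟨bR, hbR, hbRb⟩ := hπ₃ m hm3
  rw [Walk.support_reverse, List.mem_reverse] at haQ hbR
  have hca : i ≤ G.dist s cP := hP cP hcP
  have ha1 : G.dist s aQ + G.dist aQ u ≤ i := keyQ aQ haQ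
  have hb1 : G.dist s bR + G.dist bR v ≤ i := keyR bR hbR
  have dab : G.dist aQ bR ≤ ℓ := hlen m aQ haQb bR hbRb
  have dac : G.dist aQ cP ≤ ℓ := hlen m aQ haQb cP hcPb
  have dbc : G.dist bR cP ≤ ℓ := hlen m bR hbRb cP hcPb
  have t1 : G.dist s cP ≤ G.dist s aQ + G.dist aQ cP := hG.dist_triangle
  have t2 : G.dist s cP ≤ G.dist s bR + G.dist bR cP := hG.dist_triangle
  have t3 : G.dist u v ≤ G.dist u aQ + G.dist aQ v := hG.dist_triangle
  have t4 : G.dist aQ v ≤ G.dist aQ bR + G.dist bR v := hG.dist_triangle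
  have e1 : G.dist u aQ = G.dist aQ u := SimpleGraph.dist_comm
  omega
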